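/- arXiv:2403.15963 — 3 statements merged into one kernel-verified Lean document; each statement's English description precedes it below -/
import Mathlib

section
/- (Glued supersolution.) Let λ̄ ∈ ℝ, δ > 0 and z₁ < z₂. Suppose f₁, f₂ : ℝ → ℝ are bounded C¹ functions satisfying a(x)f_i′(x) + H(f_i(x),x) = λ̄ for all x ∈ ℝ (i = 1,2), and g is C¹ on [z₁,z₂] with a(x)g′(x) + H(g(x),x) = λ̄ + δ for all x ∈ [z₁,z₂], g(z₁) = f₁(z₁) and g(z₂) = f₂(z₂). Define F : ℝ → ℝ by F(x) = ∫_{z₁}^x f₁(y)dy for x ≤ z₁, F(x) = ∫_{z₁}^x g(y)dy for z₁ < x < z₂, and F(x) = ∫_{z₁}^{z₂} g(y)dy + ∫_{z₂}^x f₂(y)dy for x ≥ z₂. Then F is C¹ and Lipschitz on ℝ, and w(t,x) := t(λ̄ + δ) + F(x) is a viscosity supersolution of ∂_t u = a(x) ∂²_{xx} u + H(∂_x u, x) on (0,∞) × ℝ. -/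
open MeasureTheory Filter Set

lemma hasDerivAt_intAntideriv {f : ℝ → ℝ} (hf : Continuous f) (c x : ℝ) :
    HasDerivAt (fun u => ∫ y in c..u, f y) (f x) x :=
  (intervalIntegral.integral_hasStrictDerivAt_right (hf.intervalIntegrable _ _)
    (hf.stronglyMeasurableAtFilter _ _) hf.continuousAt).hasDerivAt


def IsViscositySubsolution (alpha : ℝ → ℝ) (h : ℝ → ℝ → ℝ) (v : ℝ → ℝ → ℝ) : Prop :=
  ∀ t₀ x₀ : ℝ, 0 < t₀ →
    ∀ φ : ℝ × ℝ → ℝ, ContDiffOn ℝ 2 φ {q : ℝ × ℝ | 0 < q.1} →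
      IsLocalMax (fun q : ℝ × ℝ => v q.1 q.2 - φ q) (t₀, x₀) →
      deriv (fun t => φ (t, x₀)) t₀ ≤
        alpha x₀ * deriv (deriv fun x => φ (t₀, x)) x₀ +
          h (deriv (fun x => φ (t₀, x)) x₀) x₀

def IsViscositySupersolution (alpha : ℝ → ℝ) (h : ℝ → ℝ → ℝ) (v : ℝ → ℝ → ℝ) : Prop :=
  ∀ t₀ x₀ : ℝ, 0 < t₀ →
    ∀ φ : ℝ × ℝ → ℝ, ContDiffOn ℝ 2 φ {q : ℝ × ℝ | 0 < q.1} →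
      IsLocalMin (fun q : ℝ × ℝ => v q.1 q.2 - φ q) (t₀, x₀) →
      alpha x₀ * deriv (deriv fun x => φ (t₀, x)) x₀ +
          h (deriv (fun x => φ (t₀, x)) x₀) x₀ ≤
        deriv (fun t => φ (t, x₀)) t₀

def IsViscositySolution (alpha : ℝ → ℝ) (h : ℝ → ℝ → ℝ) (v : ℝ → ℝ → ℝ) : Prop :=
  IsViscositySubsolution alpha h v ∧ IsViscositySupersolution alpha h v

/-- One-sided second-order condition at a local minimum. -/
lemma second_order_right {ψ : ℝ → ℝ} {x₀ D : ℝ} (hmin : IsLocalMin ψ x₀)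
    (hdiff : ∀ᶠ x in nhds x₀, DifferentiableAt ℝ ψ x)
    (h0 : deriv ψ x₀ = 0)
    (hD : HasDerivWithinAt (deriv ψ) D (Ici x₀) x₀) : 0 ≤ D := by
  by_contra hneg
  push_neg at hneg
  have hslope : Tendsto (slope (deriv ψ) x₀) (nhdsWithin x₀ (Ici x₀ \ {x₀})) (nhds D) :=
    hasDerivWithinAt_iff_tendsto_slope.mp hD
  rw [Ici_sdiff_left] at hslope
  have h1 : ∀ᶠ x in nhdsWithin x₀ (Ioi x₀), deriv ψ x < 0 := by
    filter_upwards [hslope.eventually_lt_const hneg, self_mem_nhdsWithin] with x hx hx'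
    rw [slope_def_field, h0, sub_zero, div_neg_iff] at hx
    rcases hx with ⟨_, hb⟩ | ⟨ha, _⟩
    · exact absurd (sub_pos.mpr (mem_Ioi.mp hx')) (not_lt.mpr hb.le)
    · exact ha
  have h2 : ∀ᶠ x in nhds x₀, DifferentiableAt ℝ ψ x ∧ ψ x₀ ≤ ψ x := hdiff.and hmin
  have h3 : ∀ᶠ x in nhdsWithin x₀ (Ioi x₀),
      deriv ψ x < 0 ∧ DifferentiableAt ℝ ψ x ∧ ψ x₀ ≤ ψ x :=
    h1.and (h2.filter_mono nhdsWithin_le_nhds)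
  obtain ⟨u, hu, hIoc⟩ := mem_nhdsGT_iff_exists_Ioc_subset.mp h3
  have hdiffIcc : ∀ x ∈ Icc x₀ u, DifferentiableAt ℝ ψ x := by
    intro x hx
    rcases eq_or_lt_of_le hx.1 with rfl | h
    · exact h2.self_of_nhds.1
    · exact (hIoc ⟨h, hx.2⟩).2.1
  have hcont : ContinuousOn ψ (Icc x₀ u) :=
    fun x hx => (hdiffIcc x hx).continuousAt.continuousWithinAt
  have hanti : StrictAntiOn ψ (Icc x₀ u) := by
    refine strictAntiOn_of_deriv_neg (convex_Icc _ _) hcont ?_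
    rw [interior_Icc]
    intro x hx
    exact (hIoc ⟨hx.1, hx.2.le⟩).1
  have hlt := hanti (left_mem_Icc.mpr hu.le) (right_mem_Icc.mpr hu.le) hu
  exact absurd (hIoc ⟨hu, le_refl u⟩).2.2 (not_le.mpr hlt)


theorem glued_supersolution
    (a : ℝ → ℝ) (H : ℝ → ℝ → ℝ)
    (ha_cont : Continuous a) (ha_pos : ∀ x, 0 < a x) (ha_le_one : ∀ x, a x ≤ 1)
    (hH_cont : Continuous fun q : ℝ × ℝ => H q.1 q.2)
    (lam δ : ℝ) (hδ : 0 < δ) (z₁ z₂ : ℝ) (hz : z₁ < z₂)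
    (f₁ f₂ : ℝ → ℝ)
    (hb₁ : ∃ M, ∀ x, |f₁ x| ≤ M) (hb₂ : ∃ M, ∀ x, |f₂ x| ≤ M)
    (hc₁ : ContDiff ℝ 1 f₁) (hc₂ : ContDiff ℝ 1 f₂)
    (heq₁ : ∀ x, a x * deriv f₁ x + H (f₁ x) x = lam)
    (heq₂ : ∀ x, a x * deriv f₂ x + H (f₂ x) x = lam)
    (g g' : ℝ → ℝ)
    (hg : ∀ x ∈ Icc z₁ z₂, HasDerivWithinAt g (g' x) (Icc z₁ z₂) x)
    (hg' : ContinuousOn g' (Icc z₁ z₂))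
    (hgeq : ∀ x ∈ Icc z₁ z₂, a x * g' x + H (g x) x = lam + δ)
    (hgz₁ : g z₁ = f₁ z₁) (hgz₂ : g z₂ = f₂ z₂)
    (F : ℝ → ℝ)
    (hF : ∀ x, F x =
      if x ≤ z₁ then ∫ y in z₁..x, f₁ y
      else if x < z₂ then ∫ y in z₁..x, g y
      else (∫ y in z₁..z₂, g y) + ∫ y in z₂..x, f₂ y) :
    ContDiff ℝ 1 F ∧ (∃ L : NNReal, LipschitzWith L F) ∧
    IsViscositySupersolution a H (fun t x => t * (lam + δ) + F x) := by
  -- continuity of g on the interval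
  have hgc : ContinuousOn g (Icc z₁ z₂) := fun x hx => (hg x hx).continuousWithinAt
  -- the clamp function and extended g
  set cl : ℝ → ℝ := fun x => max z₁ (min x z₂) with hcl_def
  have hcl_mem : ∀ x, cl x ∈ Icc z₁ z₂ := fun x =>
    ⟨le_max_left _ _, max_le hz.le (min_le_right _ _)⟩
  have hcl_cont : Continuous cl := (continuous_const.max (continuous_id.min continuous_const))
  have hcl_id : ∀ x ∈ Icc z₁ z₂, cl x = x := by
    intro x hx
    simp only [hcl_def]
    rw [min_eq_left hx.2, max_eq_right hx.1]
  set gt : ℝ → ℝ := fun x => g (cl x) with hgt_def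
  have hgt_cont : Continuous gt := hgc.comp_continuous hcl_cont hcl_mem
  have hgt_eq : ∀ x ∈ Icc z₁ z₂, gt x = g x := fun x hx => by
    simp only [hgt_def]; rw [hcl_id x hx]
  -- glued derivative
  set G : ℝ → ℝ := fun x => if x ≤ z₁ then f₁ x else if x ≤ z₂ then gt x else f₂ x with hG_def
  have hG₁ : ∀ x ≤ z₁, G x = f₁ x := fun x hx => by simp only [hG_def]; rw [if_pos hx]
  have hGg : ∀ x ∈ Icc z₁ z₂, G x = g x := by
    intro x hx
    simp only [hG_def]
    rcases eq_or_lt_of_le hx.1 with rfl | h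
    · rw [if_pos le_rfl, hgz₁]
    · rw [if_neg (not_le.mpr h), if_pos hx.2, hgt_eq x hx]
  have hG₂ : ∀ x, z₂ ≤ x → G x = f₂ x := by
    intro x hx
    simp only [hG_def]
    rcases eq_or_lt_of_le hx with rfl | h
    · rw [if_neg (not_le.mpr hz), if_pos le_rfl, hgt_eq z₂ ⟨hz.le, le_rfl⟩, hgz₂]
    · rw [if_neg (not_le.mpr (hz.trans h)), if_neg (not_le.mpr h)]
  have hG_cont : Continuous G := by
    apply Continuous.if_le ?_ ?_ continuous_id continuous_const
    · intro x hxeq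
      obtain rfl : x = z₁ := hxeq
      rw [if_pos hz.le, hgt_eq x ⟨le_rfl, hz.le⟩, hgz₁]
    · exact hc₁.continuous
    · apply Continuous.if_le hgt_cont hc₂.continuous continuous_id continuous_const
      intro x hxeq
      obtain rfl : x = z₂ := hxeq
      rw [hgt_eq x ⟨hz.le, le_rfl⟩, hgz₂]
  -- the three antiderivatives
  set Φ₁ : ℝ → ℝ := fun u => ∫ y in z₁..u, f₁ y with hΦ₁_def
  set Φg : ℝ → ℝ := fun u => ∫ y in z₁..u, gt y with hΦg_def
  set Φ₂ : ℝ → ℝ := fun u => (∫ y in z₁..z₂, gt y) + ∫ y in z₂..u, f₂ y with hΦ₂_def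
  have hdΦ₁ : ∀ y, HasDerivAt Φ₁ (f₁ y) y := hasDerivAt_intAntideriv hc₁.continuous z₁
  have hdΦg : ∀ y, HasDerivAt Φg (gt y) y := hasDerivAt_intAntideriv hgt_cont z₁
  have hdΦ₂ : ∀ y, HasDerivAt Φ₂ (f₂ y) y := fun y =>
    (hasDerivAt_intAntideriv hc₂.continuous z₂ y).const_add _
  -- identification of F with the antiderivatives
  have hint : ∀ y ∈ Icc z₁ z₂, (∫ t in z₁..y, g t) = ∫ t in z₁..y, gt t := by
    intro y hy
    refine intervalIntegral.integral_congr fun t ht => ?_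
    rw [uIcc_of_le hy.1] at ht
    exact (hgt_eq t ⟨ht.1, ht.2.trans hy.2⟩).symm
  have e₁ : ∀ y ∈ Iic z₁, F y = Φ₁ y := fun y hy => by rw [hF y, if_pos (mem_Iic.mp hy)]
  have eg : ∀ y ∈ Icc z₁ z₂, F y = Φg y := by
    intro y hy
    rw [hF y]
    rcases eq_or_lt_of_le hy.1 with rfl | h1
    · rw [if_pos le_rfl]
      simp [hΦg_def]
    · rcases eq_or_lt_of_le hy.2 with rfl | h2
      · rw [if_neg (not_le.mpr h1), if_neg (lt_irrefl _), intervalIntegral.integral_same,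
          add_zero, hint y ⟨h1.le, le_rfl⟩]
      · rw [if_neg (not_le.mpr h1), if_pos h2, hint y hy]
  have e₂ : ∀ y ∈ Ici z₂, F y = Φ₂ y := by
    intro y hy
    rw [hF y, if_neg (not_le.mpr (hz.trans_le hy)), if_neg (not_lt.mpr hy),
      hint z₂ ⟨hz.le, le_rfl⟩]
  -- F has derivative G everywhere
  have key : ∀ x, HasDerivAt F (G x) x := by
    intro x
    have h1 : x ≤ z₁ → HasDerivWithinAt F (G x) (Iic z₁) x := fun hx => by
      rw [hG₁ x hx]
      exact ((hdΦ₁ x).hasDerivWithinAt).congr e₁ (e₁ x hx)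
    have h2 : x ∈ Icc z₁ z₂ → HasDerivWithinAt F (G x) (Icc z₁ z₂) x := fun hx => by
      have : G x = gt x := by rw [hGg x hx, ← hgt_eq x hx]
      rw [this]
      exact ((hdΦg x).hasDerivWithinAt).congr eg (eg x hx)
    have h3 : z₂ ≤ x → HasDerivWithinAt F (G x) (Ici z₂) x := fun hx => by
      rw [hG₂ x hx]
      exact ((hdΦ₂ x).hasDerivWithinAt).congr e₂ (e₂ x hx)
    rcases lt_trichotomy x z₁ with h | rfl | h
    · exact (h1 h.le).hasDerivAt (Iic_mem_nhds h)
    · exact ((h1 le_rfl).union (h2 ⟨le_rfl, hz.le⟩)).hasDerivAt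
        (by rw [Iic_union_Icc_eq_Iic hz.le]; exact Iic_mem_nhds hz)
    · rcases lt_trichotomy x z₂ with h' | rfl | h'
      · exact (h2 ⟨h.le, h'.le⟩).hasDerivAt (Icc_mem_nhds h h')
      · exact ((h2 ⟨hz.le, le_rfl⟩).union (h3 le_rfl)).hasDerivAt
          (by rw [Icc_union_Ici_eq_Ici hz.le]; exact Ici_mem_nhds hz)
      · exact (h3 h'.le).hasDerivAt (Ici_mem_nhds h')
  have hFdiff : Differentiable ℝ F := fun x => (key x).differentiableAt
  have hderivF : deriv F = G := funext fun x => (key x).deriv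
  have hFC1 : ContDiff ℝ 1 F := contDiff_one_iff_deriv.mpr ⟨hFdiff, hderivF ▸ hG_cont⟩
  -- Lipschitz
  obtain ⟨M₁, hM₁⟩ := hb₁
  obtain ⟨M₂, hM₂⟩ := hb₂
  obtain ⟨Mg, hMg⟩ := isCompact_Icc.exists_bound_of_continuousOn hgc
  have hLip : ∃ L : NNReal, LipschitzWith L F := by
    set C : ℝ := max M₁ (max Mg M₂) with hC_def
    have hC0 : 0 ≤ C := le_trans (abs_nonneg _) ((hM₁ 0).trans (le_max_left _ _))
    have hbound : ∀ x, |G x| ≤ C := by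
      intro x
      simp only [hG_def]
      split_ifs with h h'
      · exact (hM₁ x).trans (le_max_left _ _)
      · exact (hMg (cl x) (hcl_mem x)).trans ((le_max_left _ _).trans (le_max_right _ _))
      · exact (hM₂ x).trans ((le_max_right _ _).trans (le_max_right _ _))
    refine ⟨C.toNNReal, lipschitzWith_of_nnnorm_deriv_le hFdiff fun x => ?_⟩
    rw [← NNReal.coe_le_coe, coe_nnnorm, Real.coe_toNNReal _ hC0, hderivF, Real.norm_eq_abs]
    exact hbound x
  refine ⟨hFC1, hLip, ?_⟩
  -- the supersolution property
  intro t₀ x₀ ht₀ φ hφ hmin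
  have hUopen : IsOpen {q : ℝ × ℝ | 0 < q.1} := isOpen_lt continuous_const continuous_fst
  have hφat : ContDiffAt ℝ 2 φ (t₀, x₀) := hφ.contDiffAt (hUopen.mem_nhds ht₀)
  have hlineT : ContDiffAt ℝ 2 (fun t : ℝ => φ (t, x₀)) t₀ :=
    hφat.comp t₀ ((contDiff_id.prodMk contDiff_const).contDiffAt)
  have hlineX : ContDiffAt ℝ 2 (fun x : ℝ => φ (t₀, x)) x₀ :=
    hφat.comp x₀ ((contDiff_const.prodMk contDiff_id).contDiffAt)
  -- time derivative
  have hmt : IsLocalMin (fun t : ℝ => t * (lam + δ) + F x₀ - φ (t, x₀)) t₀ := by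
    have h := IsMinFilter.comp_tendsto (g := fun t : ℝ => (t, x₀)) hmin
      ((continuous_id.prodMk continuous_const).tendsto t₀)
    exact h
  have hφt_diff : DifferentiableAt ℝ (fun t : ℝ => φ (t, x₀)) t₀ :=
    hlineT.differentiableAt (by norm_num)
  have hdt : HasDerivAt (fun t : ℝ => t * (lam + δ) + F x₀ - φ (t, x₀))
      ((lam + δ) - deriv (fun t : ℝ => φ (t, x₀)) t₀) t₀ :=
    (((hasDerivAt_mul_const (lam + δ)).add_const (F x₀)).sub hφt_diff.hasDerivAt)
  have hTeq : deriv (fun t : ℝ => φ (t, x₀)) t₀ = lam + δ := by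
    have h0 := hmt.deriv_eq_zero
    rw [hdt.deriv] at h0
    linarith
  -- space restriction
  set ψ : ℝ → ℝ := fun x : ℝ => t₀ * (lam + δ) + F x - φ (t₀, x) with hψ_def
  have hms : IsLocalMin ψ x₀ := by
    have h := IsMinFilter.comp_tendsto (g := fun x : ℝ => (t₀, x)) hmin
      ((continuous_const.prodMk continuous_id).tendsto x₀)
    exact h
  have hevd : ∀ᶠ x in nhds x₀, DifferentiableAt ℝ (fun x : ℝ => φ (t₀, x)) x :=
    (hlineX.eventually (by simp)).mono fun y hy => hy.differentiableAt (by norm_num)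
  have hψderiv : ∀ᶠ x in nhds x₀, deriv ψ x = G x - deriv (fun x : ℝ => φ (t₀, x)) x := by
    filter_upwards [hevd] with x hx
    exact (((key x).const_add (t₀ * (lam + δ))).sub hx.hasDerivAt).deriv
  have hψdiff : ∀ᶠ x in nhds x₀, DifferentiableAt ℝ ψ x := by
    filter_upwards [hevd] with x hx
    exact (((key x).const_add (t₀ * (lam + δ))).sub hx.hasDerivAt).differentiableAt
  have hψ0 : deriv ψ x₀ = 0 := hms.deriv_eq_zero
  have hXeq : deriv (fun x : ℝ => φ (t₀, x)) x₀ = G x₀ := by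
    have h := hψderiv.self_of_nhds
    rw [hψ0] at h
    linarith
  -- second space derivative of the test function
  have hd2 : DifferentiableAt ℝ (deriv (fun x : ℝ => φ (t₀, x))) x₀ := by
    obtain ⟨u, hu, hcd⟩ := hlineX.contDiffOn (le_refl 2) (by simp)
    have hx₀u : x₀ ∈ interior u := mem_interior_iff_mem_nhds.mpr hu
    have hcd' := (hcd.mono interior_subset).deriv_of_isOpen (m := 1) isOpen_interior
      (by norm_num)
    exact (hcd'.differentiableOn one_ne_zero).differentiableAt (isOpen_interior.mem_nhds hx₀u)
  -- one-sided derivative of G with the PDE inequality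
  obtain ⟨R, hGR, hRineq⟩ :
      ∃ R, HasDerivWithinAt G R (Ici x₀) x₀ ∧ a x₀ * R + H (G x₀) x₀ ≤ lam + δ := by
    rcases lt_or_ge x₀ z₁ with h | h
    · refine ⟨deriv f₁ x₀, ?_, ?_⟩
      · have heqn : G =ᶠ[nhds x₀] f₁ := by
          filter_upwards [Iio_mem_nhds h] with y hy
          exact hG₁ y (le_of_lt hy)
        exact ((hc₁.differentiable one_ne_zero x₀).hasDerivAt.congr_of_eventuallyEq
          heqn).hasDerivWithinAt
      · rw [hG₁ x₀ h.le, heq₁ x₀]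
        linarith
    · rcases lt_or_ge x₀ z₂ with h' | h'
      · refine ⟨g' x₀, ?_, ?_⟩
        · have hmem : Icc z₁ z₂ ∈ nhdsWithin x₀ (Ici x₀) := by
            rw [mem_nhdsWithin]
            exact ⟨Iio z₂, isOpen_Iio, h', fun y hy => ⟨h.trans hy.2, hy.1.le⟩⟩
          have hgw : HasDerivWithinAt g (g' x₀) (Icc z₁ z₂) x₀ := hg x₀ ⟨h, h'.le⟩
          have hGw : HasDerivWithinAt G (g' x₀) (Icc z₁ z₂) x₀ :=
            hgw.congr (fun y hy => hGg y hy) (hGg x₀ ⟨h, h'.le⟩)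
          exact hGw.mono_of_mem_nhdsWithin hmem
        · rw [hGg x₀ ⟨h, h'.le⟩, hgeq x₀ ⟨h, h'.le⟩]
      · refine ⟨deriv f₂ x₀, ?_, ?_⟩
        · have heqn : ∀ y ∈ Ici x₀, G y = f₂ y := fun y hy => hG₂ y (h'.trans hy)
          exact ((hc₂.differentiable one_ne_zero x₀).hasDerivAt.hasDerivWithinAt).congr heqn
            (hG₂ x₀ h')
        · rw [hG₂ x₀ h', heq₂ x₀]
          linarith
  -- one-sided second-order condition
  have hD : HasDerivWithinAt (deriv ψ)
      (R - deriv (deriv fun x : ℝ => φ (t₀, x)) x₀) (Ici x₀) x₀ := by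
    have hsub : HasDerivWithinAt (fun x => G x - deriv (fun x : ℝ => φ (t₀, x)) x)
        (R - deriv (deriv fun x : ℝ => φ (t₀, x)) x₀) (Ici x₀) x₀ :=
      hGR.sub hd2.hasDerivAt.hasDerivWithinAt
    exact hsub.congr_of_eventuallyEq (hψderiv.filter_mono nhdsWithin_le_nhds)
      hψderiv.self_of_nhds
  have h2nd : 0 ≤ R - deriv (deriv fun x : ℝ => φ (t₀, x)) x₀ :=
    second_order_right hms hψdiff hψ0 hD
  rw [hTeq, hXeq]
  have hmul := mul_le_mul_of_nonneg_left
    (by linarith : deriv (deriv fun x : ℝ => φ (t₀, x)) x₀ ≤ R) (ha_pos x₀).le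
  linarith
end

section
/- (Perturbation of viscosity sub/supersolutions.) Let u be continuous on [0,∞) × ℝ and suppose there exists ℓ > 0 with |u(t,x) − u(t,y)| ≤ ℓ|x − y| for all t ≥ 0 and x, y ∈ ℝ. Set R = ℓ + 1, let K_R be the constant from (H3), let δ ∈ (0,1), C ∈ ℝ, and ψ(x) = (2/π)∫₀ˣ arctan(y) dy. If u is a viscosity subsolution of ∂_t u = a(x) ∂²_{xx} u + H(∂_x u, x) on (0,∞) × ℝ, then v(t,x) := u(t,x) − t(K_R + 1)δ − δψ(x) − C is also a viscosity subsolution of this equation; if u is a viscosity supersolution, then w(t,x) := u(t,x) + t(K_R + 1)δ + δψ(x) + C is also a viscosity supersolution of this equation. -/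
set_option maxHeartbeats 1000000

open MeasureTheory Filter Set Topology

noncomputable def psiAux (x : ℝ) : ℝ := x * Real.arctan x - Real.log (1 + x ^ 2) / 2

lemma one_add_sq_pos (x : ℝ) : (0:ℝ) < 1 + x ^ 2 := by positivity

lemma hasDerivAt_psiAux (x : ℝ) : HasDerivAt psiAux (Real.arctan x) x := by
  have h1 : HasDerivAt (fun x : ℝ => x * Real.arctan x)
      (1 * Real.arctan x + x * (1 / (1 + x ^ 2))) x :=
    (hasDerivAt_id x).mul (Real.hasDerivAt_arctan x)
  have h0 : HasDerivAt (fun x : ℝ => 1 + x ^ 2) (0 + 2 * x) x := by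
    have := ((hasDerivAt_pow 2 x).const_add (1:ℝ))
    simpa using this
  have h2 : HasDerivAt (fun x : ℝ => Real.log (1 + x ^ 2)) ((0 + 2 * x) / (1 + x ^ 2)) x :=
    h0.log (ne_of_gt (one_add_sq_pos x))
  have := h1.sub (h2.div_const 2)
  refine HasDerivAt.congr_deriv this ?_
  have := ne_of_gt (one_add_sq_pos x)
  field_simp
  ring

lemma contDiff_psiAux : ContDiff ℝ 2 psiAux := by
  have hlog : ContDiff ℝ 2 (fun x : ℝ => Real.log (1 + x ^ 2)) :=
    (contDiff_const.add (contDiff_id.pow 2)).log (fun x => ne_of_gt (one_add_sq_pos x))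
  exact (contDiff_id.mul Real.contDiff_arctan).sub (hlog.div_const 2)

lemma psiAux_integral (x : ℝ) : ∫ y in (0:ℝ)..x, Real.arctan y = psiAux x := by
  have := intervalIntegral.integral_eq_sub_of_hasDerivAt
    (f := psiAux) (f' := fun y => Real.arctan y) (a := 0) (b := x)
    (fun y _ => hasDerivAt_psiAux y)
    (Real.continuous_arctan.intervalIntegrable 0 x)
  simp only [this, psiAux]
  norm_num

lemma abs_deriv_le_of_lower {g : ℝ → ℝ} {g' x₀ ℓ : ℝ} (hg : HasDerivAt g g' x₀)
    (h : ∀ᶠ x in nhds x₀, -(ℓ * |x - x₀|) ≤ g x - g x₀) : |g'| ≤ ℓ := by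
  have hslope := hasDerivAt_iff_tendsto_slope.mp hg
  rw [abs_le]
  constructor
  · have h1 : Tendsto (slope g x₀) (𝓝[>] x₀) (𝓝 g') :=
      hslope.mono_left (nhdsWithin_mono _ (fun x hx => ne_of_gt hx))
    refine ge_of_tendsto h1 ?_
    filter_upwards [self_mem_nhdsWithin, eventually_nhdsWithin_of_eventually_nhds h] with x hx hx'
    have hx0 : 0 < x - x₀ := sub_pos.mpr hx
    rw [abs_of_pos hx0] at hx'
    rw [slope_def_field, le_div_iff₀ hx0]
    nlinarith [hx']
  · have h1 : Tendsto (slope g x₀) (𝓝[<] x₀) (𝓝 g') :=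
      hslope.mono_left (nhdsWithin_mono _ (fun x hx => ne_of_lt hx))
    refine le_of_tendsto h1 ?_
    filter_upwards [self_mem_nhdsWithin, eventually_nhdsWithin_of_eventually_nhds h] with x hx hx'
    have hx0 : x - x₀ < 0 := sub_neg.mpr hx
    rw [abs_of_neg hx0] at hx'
    rw [slope_def_field, div_le_iff_of_neg hx0]
    nlinarith [hx']

lemma abs_deriv_le_of_upper {g : ℝ → ℝ} {g' x₀ ℓ : ℝ} (hg : HasDerivAt g g' x₀)
    (h : ∀ᶠ x in nhds x₀, g x - g x₀ ≤ ℓ * |x - x₀|) : |g'| ≤ ℓ := by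
  have := abs_deriv_le_of_lower (g := fun x => -g x) hg.neg (h.mono fun x hx => by
    simp only [neg_sub_neg]
    linarith)
  simpa using this

lemma perturb_facts (φ : ℝ × ℝ → ℝ) (hφ : ContDiffOn ℝ 2 φ {q : ℝ × ℝ | 0 < q.1})
    (t₀ x₀ : ℝ) (ht₀ : 0 < t₀) (c d E : ℝ)
    (Φ : ℝ × ℝ → ℝ) (hΦ : ∀ q : ℝ × ℝ, Φ q = φ q + q.1 * c + d * psiAux q.2 + E) :
    ContDiffOn ℝ 2 Φ {q : ℝ × ℝ | 0 < q.1} ∧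
    deriv (fun t => Φ (t, x₀)) t₀ = deriv (fun t => φ (t, x₀)) t₀ + c ∧
    HasDerivAt (fun x => Φ (t₀, x))
      (deriv (fun x => φ (t₀, x)) x₀ + d * Real.arctan x₀) x₀ ∧
    deriv (deriv fun x => Φ (t₀, x)) x₀ =
      deriv (deriv fun x => φ (t₀, x)) x₀ + d * (1 / (1 + x₀ ^ 2)) := by
  have hopen : IsOpen {q : ℝ × ℝ | 0 < q.1} := isOpen_lt continuous_const continuous_fst
  have hmem : ∀ x : ℝ, ((t₀, x) : ℝ × ℝ) ∈ {q : ℝ × ℝ | 0 < q.1} := fun x => ht₀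
  have hg : ContDiff ℝ 2 (fun x => φ (t₀, x)) := by
    rw [contDiff_iff_contDiffAt]
    intro x
    exact (hφ.contDiffAt (hopen.mem_nhds (hmem x))).comp x
      (contDiff_const.prodMk contDiff_id).contDiffAt
  have hgd : Differentiable ℝ (fun x => φ (t₀, x)) :=
    hg.differentiable (by norm_num)
  have hg' : ContDiff ℝ 1 (deriv fun x => φ (t₀, x)) := by
    have h2 : ContDiff ℝ (1 + 1 : ℕ) (fun x => φ (t₀, x)) := by
      exact_mod_cast hg
    exact (contDiff_succ_iff_deriv.mp h2).2.2
  have hts : DifferentiableAt ℝ (fun t => φ (t, x₀)) t₀ := by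
    have := (hφ.contDiffAt (hopen.mem_nhds (hmem x₀))).comp t₀
      (contDiff_id.prodMk contDiff_const).contDiffAt
    exact this.differentiableAt (by norm_num)
  refine ⟨?_, ?_, ?_, ?_⟩
  · have hG : ContDiff ℝ 2 (fun q : ℝ × ℝ => q.1 * c + d * psiAux q.2 + E) :=
      ((contDiff_fst.mul contDiff_const).add
        (contDiff_const.mul (contDiff_psiAux.comp contDiff_snd))).add contDiff_const
    have : ContDiffOn ℝ 2 (fun q : ℝ × ℝ => φ q + (q.1 * c + d * psiAux q.2 + E))
        {q : ℝ × ℝ | 0 < q.1} := hφ.add hG.contDiffOn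
    refine this.congr fun q _ => by rw [hΦ q]; ring
  · have base := (hts.hasDerivAt.add (hasDerivAt_mul_const c)).add_const (d * psiAux x₀ + E)
    have h1 : HasDerivAt (fun t => Φ (t, x₀)) (deriv (fun t => φ (t, x₀)) t₀ + c) t₀ :=
      base.congr_of_eventuallyEq (Eventually.of_forall fun t =>
        show Φ (t, x₀) = _ from by rw [hΦ]; simp only [Pi.add_apply]; ring)
    exact h1.deriv
  · have base := ((hgd x₀).hasDerivAt.add_const (t₀ * c)).add
      (((hasDerivAt_psiAux x₀).const_mul d).add_const E)
    exact base.congr_of_eventuallyEq (Eventually.of_forall fun y =>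
      show Φ (t₀, y) = _ from by rw [hΦ]; simp only [Pi.add_apply]; ring)
  · have hfun : (deriv fun x => Φ (t₀, x)) =
        fun x => deriv (fun x => φ (t₀, x)) x + d * Real.arctan x := by
      funext x
      have base := ((hgd x).hasDerivAt.add_const (t₀ * c)).add
        (((hasDerivAt_psiAux x).const_mul d).add_const E)
      have h2 : HasDerivAt (fun y => Φ (t₀, y))
          (deriv (fun x => φ (t₀, x)) x + d * Real.arctan x) x :=
        base.congr_of_eventuallyEq (Eventually.of_forall fun y =>
          show Φ (t₀, y) = _ from by rw [hΦ]; simp only [Pi.add_apply]; ring)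
      exact h2.deriv
    rw [hfun]
    have h3 : HasDerivAt (fun x => deriv (fun x => φ (t₀, x)) x + d * Real.arctan x)
        (deriv (deriv fun x => φ (t₀, x)) x₀ + d * (1 / (1 + x₀ ^ 2))) x₀ :=
      ((hg'.differentiable one_ne_zero x₀).hasDerivAt).add
        ((Real.hasDerivAt_arctan x₀).const_mul d)
    exact h3.deriv

theorem perturbed_sub_and_supersolutions
    (a : ℝ → ℝ) (H : ℝ → ℝ → ℝ)
    (ha_cont : Continuous a) (ha_pos : ∀ x, 0 < a x) (ha_le_one : ∀ x, a x ≤ 1)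
    (hH_cont : Continuous fun q : ℝ × ℝ => H q.1 q.2)
    (u : ℝ → ℝ → ℝ)
    (hu_cont : ContinuousOn (fun q : ℝ × ℝ => u q.1 q.2) {q : ℝ × ℝ | 0 ≤ q.1})
    (ℓ : ℝ) (hℓ : 0 < ℓ)
    (hlip : ∀ t ≥ (0:ℝ), ∀ x y : ℝ, |u t x - u t y| ≤ ℓ * |x - y|)
    (K : ℝ) (hK : 0 < K)
    (hKlip : ∀ p q x : ℝ, |p| ≤ ℓ + 1 → |q| ≤ ℓ + 1 → |H p x - H q x| ≤ K * |p - q|)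
    (δ : ℝ) (hδ : δ ∈ Ioo (0:ℝ) 1) (C : ℝ)
    (ψ : ℝ → ℝ) (hψ : ∀ x, ψ x = (2 / Real.pi) * ∫ y in (0:ℝ)..x, Real.arctan y) :
    (IsViscositySubsolution a H u →
      IsViscositySubsolution a H (fun t x => u t x - t * (K + 1) * δ - δ * ψ x - C)) ∧
    (IsViscositySupersolution a H u →
      IsViscositySupersolution a H (fun t x => u t x + t * (K + 1) * δ + δ * ψ x + C)) := by
  obtain ⟨hδ0, hδ1⟩ := hδ
  have hψ' : ∀ x, ψ x = 2 / Real.pi * psiAux x := fun x => by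
    rw [hψ x, psiAux_integral]
  have hπ : (0:ℝ) < Real.pi := Real.pi_pos
  have h2π0 : (0:ℝ) < 2 / Real.pi := by positivity
  have h2π : 2 / Real.pi ≤ 1 := by
    rw [div_le_one hπ]; exact Real.two_le_pi
  -- common numeric facts
  constructor
  · intro hu t₀ x₀ ht₀ φ hφ hmax
    set c : ℝ := (K + 1) * δ with hc
    set d : ℝ := δ * (2 / Real.pi) with hd
    set Φ : ℝ × ℝ → ℝ := fun q => φ q + q.1 * c + d * psiAux q.2 + C with hΦdef
    obtain ⟨hreg, hdt, hdx, hdxx⟩ :=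
      perturb_facts φ hφ t₀ x₀ ht₀ c d C Φ (fun q => rfl)
    have hmax' : IsLocalMax (fun q : ℝ × ℝ => u q.1 q.2 - Φ q) (t₀, x₀) := by
      have heq : (fun q : ℝ × ℝ => u q.1 q.2 - Φ q) =
          fun q : ℝ × ℝ => (u q.1 q.2 - q.1 * (K + 1) * δ - δ * ψ q.2 - C) - φ q := by
        funext q
        simp only [hΦdef, hψ' q.2, hc, hd]
        ring
      rw [heq]
      exact hmax
    have key := hu t₀ x₀ ht₀ Φ hreg hmax'
    rw [hdt, hdxx, hdx.deriv] at key
    set p := deriv (fun x => φ (t₀, x)) x₀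
    set A := deriv (deriv fun x => φ (t₀, x)) x₀
    set Pt := deriv (fun t => φ (t, x₀)) t₀
    set e : ℝ := d * Real.arctan x₀ with he
    -- Lipschitz bound on the derivative
    have htend : Tendsto (fun x => ((t₀, x) : ℝ × ℝ)) (𝓝 x₀) (𝓝 (t₀, x₀)) :=
      ((continuous_const.prodMk continuous_id).tendsto x₀)
    have hev0 : ∀ᶠ x in 𝓝 x₀, u t₀ x - Φ (t₀, x) ≤ u t₀ x₀ - Φ (t₀, x₀) :=
      htend.eventually hmax'
    have hev : ∀ᶠ x in 𝓝 x₀,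
        -(ℓ * |x - x₀|) ≤ (fun x => Φ (t₀, x)) x - (fun x => Φ (t₀, x)) x₀ := by
      filter_upwards [hev0] with x hx
      have h1 : |u t₀ x - u t₀ x₀| ≤ ℓ * |x - x₀| := hlip t₀ (le_of_lt ht₀) x x₀
      have h2 : -(ℓ * |x - x₀|) ≤ u t₀ x - u t₀ x₀ := by
        have := neg_abs_le (u t₀ x - u t₀ x₀); linarith
      show -(ℓ * |x - x₀|) ≤ Φ (t₀, x) - Φ (t₀, x₀)
      linarith
    have hDb : |p + e| ≤ ℓ := abs_deriv_le_of_lower hdx hev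
    have harct : |Real.arctan x₀| ≤ Real.pi / 2 :=
      abs_le.mpr ⟨le_of_lt (Real.neg_pi_div_two_lt_arctan x₀),
        le_of_lt (Real.arctan_lt_pi_div_two x₀)⟩
    have hee : |e| ≤ δ := by
      rw [he, hd, abs_mul, abs_mul, abs_of_pos hδ0, abs_of_pos h2π0]
      calc δ * (2 / Real.pi) * |Real.arctan x₀| ≤ δ * (2 / Real.pi) * (Real.pi / 2) := by
            apply mul_le_mul_of_nonneg_left harct; positivity
        _ = δ := by field_simp
    have hple : |p + e| ≤ ℓ + 1 := hDb.trans (by linarith)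
    have hp : |p| ≤ ℓ + 1 := by
      have h5 : |p| ≤ |p + e| + |e| := by
        calc |p| = |p + e + -e| := by norm_num
          _ ≤ |p + e| + |-e| := abs_add_le _ _
          _ = |p + e| + |e| := by rw [abs_neg]
      linarith
    have hHb : H (p + e) x₀ - H p x₀ ≤ K * δ := by
      have h1 := hKlip (p + e) p x₀ hple hp
      have h2 : |p + e - p| = |e| := by rw [add_sub_cancel_left]
      rw [h2] at h1
      have h3 : H (p + e) x₀ - H p x₀ ≤ |H (p + e) x₀ - H p x₀| := le_abs_self _
      have h4 : K * |e| ≤ K * δ := mul_le_mul_of_nonneg_left hee (le_of_lt hK)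
      linarith
    have h1x : (1:ℝ) / (1 + x₀ ^ 2) ≤ 1 := by
      rw [div_le_one (one_add_sq_pos x₀)]; nlinarith [sq_nonneg x₀]
    have h1x0 : (0:ℝ) < 1 / (1 + x₀ ^ 2) := by positivity
    have hsb : a x₀ * (d * (1 / (1 + x₀ ^ 2))) ≤ δ := by
      have ha0 := ha_pos x₀
      have ha1 := ha_le_one x₀
      have hd0 : 0 < d := by rw [hd]; positivity
      have : d * (1 / (1 + x₀ ^ 2)) ≤ d := by nlinarith
      have hdδ : d ≤ δ := by rw [hd]; nlinarith
      nlinarith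
    have hexp : a x₀ * (A + d * (1 / (1 + x₀ ^ 2))) =
        a x₀ * A + a x₀ * (d * (1 / (1 + x₀ ^ 2))) := by ring
    rw [hexp] at key
    have hcδ : c = K * δ + δ := by rw [hc]; ring
    linarith
  · intro hu t₀ x₀ ht₀ φ hφ hmin
    set c : ℝ := -((K + 1) * δ) with hc
    set d : ℝ := -(δ * (2 / Real.pi)) with hd
    set Φ : ℝ × ℝ → ℝ := fun q => φ q + q.1 * c + d * psiAux q.2 + (-C) with hΦdef
    obtain ⟨hreg, hdt, hdx, hdxx⟩ :=
      perturb_facts φ hφ t₀ x₀ ht₀ c d (-C) Φ (fun q => rfl)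
    have hmin' : IsLocalMin (fun q : ℝ × ℝ => u q.1 q.2 - Φ q) (t₀, x₀) := by
      have heq : (fun q : ℝ × ℝ => u q.1 q.2 - Φ q) =
          fun q : ℝ × ℝ => (u q.1 q.2 + q.1 * (K + 1) * δ + δ * ψ q.2 + C) - φ q := by
        funext q
        simp only [hΦdef, hψ' q.2, hc, hd]
        ring
      rw [heq]
      exact hmin
    have key := hu t₀ x₀ ht₀ Φ hreg hmin'
    rw [hdt, hdxx, hdx.deriv] at key
    set p := deriv (fun x => φ (t₀, x)) x₀
    set A := deriv (deriv fun x => φ (t₀, x)) x₀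
    set Pt := deriv (fun t => φ (t, x₀)) t₀
    set e : ℝ := d * Real.arctan x₀ with he
    have htend : Tendsto (fun x => ((t₀, x) : ℝ × ℝ)) (𝓝 x₀) (𝓝 (t₀, x₀)) :=
      ((continuous_const.prodMk continuous_id).tendsto x₀)
    have hev0 : ∀ᶠ x in 𝓝 x₀, u t₀ x₀ - Φ (t₀, x₀) ≤ u t₀ x - Φ (t₀, x) :=
      htend.eventually hmin'
    have hev : ∀ᶠ x in 𝓝 x₀,
        (fun x => Φ (t₀, x)) x - (fun x => Φ (t₀, x)) x₀ ≤ ℓ * |x - x₀| := by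
      filter_upwards [hev0] with x hx
      have h1 : |u t₀ x - u t₀ x₀| ≤ ℓ * |x - x₀| := hlip t₀ (le_of_lt ht₀) x x₀
      have h2 : u t₀ x - u t₀ x₀ ≤ ℓ * |x - x₀| := by
        have := le_abs_self (u t₀ x - u t₀ x₀); linarith
      show Φ (t₀, x) - Φ (t₀, x₀) ≤ ℓ * |x - x₀|
      linarith
    have hDb : |p + e| ≤ ℓ := abs_deriv_le_of_upper hdx hev
    have harct : |Real.arctan x₀| ≤ Real.pi / 2 :=
      abs_le.mpr ⟨le_of_lt (Real.neg_pi_div_two_lt_arctan x₀),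
        le_of_lt (Real.arctan_lt_pi_div_two x₀)⟩
    have hee : |e| ≤ δ := by
      rw [he, hd, abs_mul, abs_neg, abs_mul, abs_of_pos hδ0, abs_of_pos h2π0]
      calc δ * (2 / Real.pi) * |Real.arctan x₀| ≤ δ * (2 / Real.pi) * (Real.pi / 2) := by
            apply mul_le_mul_of_nonneg_left harct; positivity
        _ = δ := by field_simp
    have hple : |p + e| ≤ ℓ + 1 := hDb.trans (by linarith)
    have hp : |p| ≤ ℓ + 1 := by
      have h5 : |p| ≤ |p + e| + |e| := by
        calc |p| = |p + e + -e| := by norm_num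
          _ ≤ |p + e| + |-e| := abs_add_le _ _
          _ = |p + e| + |e| := by rw [abs_neg]
      linarith
    have hHb : H p x₀ - H (p + e) x₀ ≤ K * δ := by
      have h1 := hKlip p (p + e) x₀ hp hple
      have h2 : |p - (p + e)| = |e| := by
        rw [show p - (p + e) = -e by ring, abs_neg]
      rw [h2] at h1
      have h3 : H p x₀ - H (p + e) x₀ ≤ |H p x₀ - H (p + e) x₀| := le_abs_self _
      have h4 : K * |e| ≤ K * δ := mul_le_mul_of_nonneg_left hee (le_of_lt hK)
      linarith
    have h1x : (1:ℝ) / (1 + x₀ ^ 2) ≤ 1 := by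
      rw [div_le_one (one_add_sq_pos x₀)]; nlinarith [sq_nonneg x₀]
    have h1x0 : (0:ℝ) < 1 / (1 + x₀ ^ 2) := by positivity
    have hsb : -δ ≤ a x₀ * (d * (1 / (1 + x₀ ^ 2))) := by
      have ha0 := ha_pos x₀
      have ha1 := ha_le_one x₀
      have hnd : 0 < -d := by rw [hd, neg_neg]; positivity
      have h6 : (-d) * (1 / (1 + x₀ ^ 2)) ≤ -d := by
        have := mul_le_mul_of_nonneg_left h1x (le_of_lt hnd)
        rw [mul_one] at this
        exact this
      have hdδ : -d ≤ δ := by rw [hd, neg_neg]; nlinarith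
      have h7 : a x₀ * (-d * (1 / (1 + x₀ ^ 2))) ≤ -d * (1 / (1 + x₀ ^ 2)) := by
        nlinarith [mul_pos hnd h1x0]
      have h9 : a x₀ * (d * (1 / (1 + x₀ ^ 2))) = -(a x₀ * (-d * (1 / (1 + x₀ ^ 2)))) := by ring
      rw [h9]
      have h6' : -d * (1 / (1 + x₀ ^ 2)) ≤ δ := le_trans h6 hdδ
      linarith
    have hexp : a x₀ * (A + d * (1 / (1 + x₀ ^ 2))) =
        a x₀ * A + a x₀ * (d * (1 / (1 + x₀ ^ 2))) := by ring
    rw [hexp] at key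
    have hcδ : c = -(K * δ) - δ := by rw [hc]; ring
    linarith
end

section
/- Let λ ∈ ℝ, ε > 0 and R̃ ≥ 0 be such that G_U(p) ≤ λ − ε for all p ∈ [−R̃, R̃]. Suppose f : ℝ → ℝ is bounded, C¹, and satisfies a(x)f′(x) + H(f(x),x) = λ for all x ∈ ℝ. Then for every x₀ ∈ ℝ with |f(x₀)| ≤ R̃, one has f(x) > R̃ for all x > x₀ + 2R̃/ε + 1; in particular, the set {x ∈ ℝ : |f(x)| ≤ R̃} is bounded above whenever it is nonempty. -/
open MeasureTheory Filter Set

theorem solution_escapes_low_region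
    (a : ℝ → ℝ) (H : ℝ → ℝ → ℝ)
    (ha_cont : Continuous a) (ha_pos : ∀ x, 0 < a x) (ha_le_one : ∀ x, a x ≤ 1)
    (hH_cont : Continuous fun q : ℝ × ℝ => H q.1 q.2)
    (G_U : ℝ → ℝ) (hGU_cont : Continuous G_U) (hGU_even : ∀ p, G_U (-p) = G_U p)
    (hGU_mono : MonotoneOn G_U (Ici 0)) (hGU_coercive : Tendsto G_U atTop atTop)
    (hHU : ∀ p x, H p x ≤ G_U p)
    (lam ε Rt : ℝ) (hε : 0 < ε) (hRt : 0 ≤ Rt)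
    (hgap : ∀ p : ℝ, |p| ≤ Rt → G_U p ≤ lam - ε)
    (f : ℝ → ℝ) (hb : ∃ M, ∀ x, |f x| ≤ M) (hf : ContDiff ℝ 1 f)
    (heq : ∀ x, a x * deriv f x + H (f x) x = lam) :
    (∀ x₀ : ℝ, |f x₀| ≤ Rt → ∀ x : ℝ, x₀ + 2 * Rt / ε + 1 < x → Rt < f x) ∧
    ({x : ℝ | |f x| ≤ Rt}.Nonempty → BddAbove {x : ℝ | |f x| ≤ Rt}) := by
  have hcf : Continuous f := hf.continuous
  have hdf : ∀ x, HasDerivAt f (deriv f x) x :=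
    fun x => (hf.differentiable one_ne_zero x).hasDerivAt
  -- derivative lower bound in the low region
  have key : ∀ x, |f x| ≤ Rt → ε ≤ deriv f x := by
    intro x hx
    have h1 : H (f x) x ≤ lam - ε := le_trans (hHU _ _) (hgap _ hx)
    have h2 : ε ≤ a x * deriv f x := by linarith [heq x]
    nlinarith [ha_pos x, ha_le_one x]
  -- Claim B: once above Rt, stay above Rt
  have claimB : ∀ x₁ x : ℝ, x₁ ≤ x → Rt < f x₁ → Rt < f x := by
    intro x₁ x hle h1
    by_contra hx
    push_neg at hx
    set S := Icc x₁ x ∩ {y | f y ≤ Rt} with hS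
    have hSne : S.Nonempty := ⟨x, ⟨hle, le_rfl⟩, hx⟩
    have hSbdd : BddBelow S := ⟨x₁, fun y hy => hy.1.1⟩
    have hScl : IsClosed S := isClosed_Icc.inter (isClosed_le hcf continuous_const)
    set c := sInf S with hcdef
    have hc : c ∈ S := hScl.csInf_mem hSne hSbdd
    have hx₁c : x₁ < c := by
      rcases lt_or_eq_of_le hc.1.1 with h | h
      · exact h
      · exfalso; have : f c ≤ Rt := hc.2; rw [← h] at this; linarith
    have habove : ∀ y, x₁ ≤ y → y < c → Rt < f y := by
      intro y hy1 hy2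
      by_contra h
      push_neg at h
      have : c ≤ y := csInf_le hSbdd ⟨⟨hy1, le_trans hy2.le hc.1.2⟩, h⟩
      linarith
    have fcRt : |f c| ≤ Rt := by
      refine abs_le.2 ⟨?_, hc.2⟩
      have hRtle : Rt ≤ f c := by
        have htend : Tendsto f (nhdsWithin c (Iio c)) (nhds (f c)) :=
          (hcf.continuousAt.continuousWithinAt).tendsto
        refine ge_of_tendsto htend ?_
        filter_upwards [mem_nhdsWithin_of_mem_nhds (Ioi_mem_nhds hx₁c),
          self_mem_nhdsWithin] with y hy1 hy2
        exact (habove y (le_of_lt hy1) hy2).le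
      linarith
    have hslope : Tendsto (slope f c) (nhdsWithin c (Iio c)) (nhds (deriv f c)) :=
      (hasDerivAt_iff_tendsto_slope.1 (hdf c)).mono_left
        (nhdsWithin_mono c (fun y hy => ne_of_lt hy))
    have hd0 : deriv f c ≤ 0 := by
      refine le_of_tendsto hslope ?_
      filter_upwards [mem_nhdsWithin_of_mem_nhds (Ioi_mem_nhds hx₁c),
        self_mem_nhdsWithin] with y hy1 hy2
      rw [slope_def_field]
      have h3 := habove y (le_of_lt hy1) hy2
      have hfc : f c ≤ Rt := hc.2
      have hnum : 0 < f y - f c := by linarith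
      have hden : y - c < 0 := sub_neg.2 hy2
      exact le_of_lt (div_neg_of_pos_of_neg hnum hden)
    linarith [key c fcRt]
  -- Claim A: once above -Rt, stay above -Rt
  have claimA : ∀ x₁ x : ℝ, x₁ ≤ x → -Rt ≤ f x₁ → -Rt ≤ f x := by
    intro x₁ x hle h1
    by_contra hx
    push_neg at hx
    set S := Icc x₁ x ∩ {y | -Rt ≤ f y} with hS
    have hSne : S.Nonempty := ⟨x₁, ⟨le_rfl, hle⟩, h1⟩
    have hSbdd : BddAbove S := ⟨x, fun y hy => hy.1.2⟩
    have hScl : IsClosed S := isClosed_Icc.inter (isClosed_le continuous_const hcf)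
    set c := sSup S with hcdef
    have hc : c ∈ S := hScl.csSup_mem hSne hSbdd
    have hcx : c < x := by
      rcases lt_or_eq_of_le hc.1.2 with h | h
      · exact h
      · exfalso; have : -Rt ≤ f c := hc.2; rw [h] at this; linarith
    have hbelow : ∀ y, c < y → y ≤ x → f y < -Rt := by
      intro y hy1 hy2
      by_contra h
      push_neg at h
      have : y ≤ c := le_csSup hSbdd ⟨⟨le_trans hc.1.1 hy1.le, hy2⟩, h⟩
      linarith
    have fcRt : |f c| ≤ Rt := by
      refine abs_le.2 ⟨hc.2, ?_⟩
      by_contra h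
      push_neg at h
      have := claimB c x hc.1.2 h
      linarith [hbelow x (lt_of_lt_of_le hcx le_rfl) le_rfl]
    have hslope : Tendsto (slope f c) (nhdsWithin c (Ioi c)) (nhds (deriv f c)) :=
      (hasDerivAt_iff_tendsto_slope.1 (hdf c)).mono_left
        (nhdsWithin_mono c (fun y hy => ne_of_gt hy))
    have hd0 : deriv f c ≤ 0 := by
      refine le_of_tendsto hslope ?_
      filter_upwards [mem_nhdsWithin_of_mem_nhds (Iio_mem_nhds hcx),
        self_mem_nhdsWithin] with y hy1 hy2
      rw [slope_def_field]
      have h3 := hbelow y hy2 hy1.le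
      have hfc : -Rt ≤ f c := hc.2
      have hnum : f y - f c < 0 := by linarith
      have hden : 0 < y - c := sub_pos.2 hy2
      exact le_of_lt (div_neg_of_neg_of_pos hnum hden)
    linarith [key c fcRt]
  -- main escape statement
  have part1 : ∀ x₀ : ℝ, |f x₀| ≤ Rt → ∀ x : ℝ, x₀ + 2 * Rt / ε + 1 < x → Rt < f x := by
    intro x₀ h0 x hx
    have hTnn : 0 ≤ 2 * Rt / ε := div_nonneg (by linarith) hε.le
    have hx₁ : ∃ x₁ ∈ Icc x₀ (x₀ + (2 * Rt / ε + 1)), Rt < f x₁ := by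
      by_contra h
      push_neg at h
      have h0' := abs_le.1 h0
      have hlow : ∀ y ∈ Icc x₀ (x₀ + (2 * Rt / ε + 1)), -Rt ≤ f y :=
        fun y hy => claimA x₀ y hy.1 h0'.1
      have hder : ∀ y ∈ interior (Icc x₀ (x₀ + (2 * Rt / ε + 1))), ε ≤ deriv f y :=
        fun y hy => key y (abs_le.2 ⟨hlow y (interior_subset hy), h y (interior_subset hy)⟩)
      have hmvt := Convex.mul_sub_le_image_sub_of_le_deriv (convex_Icc x₀ (x₀ + (2 * Rt / ε + 1)))
        hcf.continuousOn
        (fun y _ => ((hf.differentiable one_ne_zero) y).differentiableWithinAt)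
        hder x₀ ⟨le_rfl, by linarith⟩ (x₀ + (2 * Rt / ε + 1)) ⟨by linarith, le_rfl⟩ (by linarith)
      have hfi : f (x₀ + (2 * Rt / ε + 1)) ≤ Rt := h (x₀ + (2 * Rt / ε + 1)) ⟨by linarith, le_rfl⟩
      have hfl : -Rt ≤ f x₀ := h0'.1
      have hεT : ε * (2 * Rt / ε + 1) = 2 * Rt + ε := by
        rw [mul_add, mul_one, mul_div_cancel₀ _ (ne_of_gt hε)]
      nlinarith
    obtain ⟨x₁, hx₁mem, hx₁gt⟩ := hx₁
    exact claimB x₁ x (by linarith [hx₁mem.2]) hx₁gt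
  refine ⟨part1, ?_⟩
  rintro ⟨x₀, hx₀⟩
  refine ⟨x₀ + 2 * Rt / ε + 1, fun y hy => ?_⟩
  by_contra h
  push_neg at h
  have h1 := part1 x₀ hx₀ y h
  have h2 : |f y| ≤ Rt := hy
  rw [abs_le] at h2
  linarith
end
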